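/- Let p, r, q, N_1, N_2 ≥ 1 and let D_1 ∈ ℂ^{p×r}, C_1 ∈ ℂ^{p×N_1}, P_1 ∈ ℂ^{N_1×N_1}, Q_1 ∈ ℂ^{N_1×r}, D_2 ∈ ℂ^{r×q}, C_2 ∈ ℂ^{r×N_2}, P_2 ∈ ℂ^{N_2×N_2}, Q_2 ∈ ℂ^{N_2×q}, and assume I_{N_1} − P_1 and I_{N_2} − P_2 are invertible. Then the block matrix [[I_{N_1} − P_1, −Q_1 C_2], [0, I_{N_2} − P_2]] is invertible and (D_1 + C_1 (I_{N_1} − P_1)^{−1} Q_1)(D_2 + C_2 (I_{N_2} − P_2)^{−1} Q_2) = D_1 D_2 + [C_1 D_1 C_2] · [[I_{N_1} − P_1, −Q_1 C_2], [0, I_{N_2} − P_2]]^{−1} · [Q_1 D_2; Q_2], where [C_1 D_1 C_2] is the p×(N_1+N_2) block row and [Q_1 D_2; Q_2] is the (N_1+N_2)×q block column. -/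

import Mathlib

/-- Cascade (product) formula for realizations: the product of
`D₁ + C₁(I−P₁)⁻¹Q₁` and `D₂ + C₂(I−P₂)⁻¹Q₂` is
`D₁D₂ + [C₁  D₁C₂] [[I−P₁, −Q₁C₂],[0, I−P₂]]⁻¹ [Q₁D₂; Q₂]`. -/
theorem stmt9 (p r q N₁ N₂ : ℕ) (hp : 1 ≤ p) (hr : 1 ≤ r) (hq : 1 ≤ q)
    (hN₁ : 1 ≤ N₁) (hN₂ : 1 ≤ N₂)
    (D₁ : Matrix (Fin p) (Fin r) ℂ) (C₁ : Matrix (Fin p) (Fin N₁) ℂ)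
    (P₁ : Matrix (Fin N₁) (Fin N₁) ℂ) (Q₁ : Matrix (Fin N₁) (Fin r) ℂ)
    (D₂ : Matrix (Fin r) (Fin q) ℂ) (C₂ : Matrix (Fin r) (Fin N₂) ℂ)
    (P₂ : Matrix (Fin N₂) (Fin N₂) ℂ) (Q₂ : Matrix (Fin N₂) (Fin q) ℂ)
    (h1 : IsUnit ((1 : Matrix (Fin N₁) (Fin N₁) ℂ) - P₁))
    (h2 : IsUnit ((1 : Matrix (Fin N₂) (Fin N₂) ℂ) - P₂)) :
    IsUnit (Matrix.fromBlocks (1 - P₁) (-(Q₁ * C₂)) 0 (1 - P₂)) ∧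
    (D₁ + C₁ * ((1 : Matrix (Fin N₁) (Fin N₁) ℂ) - P₁)⁻¹ * Q₁) *
        (D₂ + C₂ * ((1 : Matrix (Fin N₂) (Fin N₂) ℂ) - P₂)⁻¹ * Q₂) =
      D₁ * D₂ +
        Matrix.fromCols C₁ (D₁ * C₂) *
          (Matrix.fromBlocks (1 - P₁) (-(Q₁ * C₂)) 0 (1 - P₂))⁻¹ *
          Matrix.fromRows (Q₁ * D₂) Q₂ := by
  letI i1 : Invertible ((1 : Matrix (Fin N₁) (Fin N₁) ℂ) - P₁) := h1.invertible
  letI i2 : Invertible ((1 : Matrix (Fin N₂) (Fin N₂) ℂ) - P₂) := h2.invertible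
  letI iB := Matrix.fromBlocksZero₂₁Invertible (1 - P₁) (-(Q₁ * C₂)) (1 - P₂)
  refine ⟨isUnit_of_invertible _, ?_⟩
  have hinv : (Matrix.fromBlocks (1 - P₁) (-(Q₁ * C₂)) 0 (1 - P₂))⁻¹ =
      Matrix.fromBlocks (1 - P₁)⁻¹
        (-((1 - P₁)⁻¹ * -(Q₁ * C₂) * (1 - P₂)⁻¹)) 0 (1 - P₂)⁻¹ := by
    rw [← Matrix.invOf_eq_nonsing_inv, Matrix.invOf_fromBlocks_zero₂₁_eq,
      Matrix.invOf_eq_nonsing_inv, Matrix.invOf_eq_nonsing_inv]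
  rw [hinv, Matrix.fromCols_mul_fromBlocks, Matrix.fromCols_mul_fromRows]
  simp only [Matrix.mul_zero, add_zero, Matrix.mul_neg, Matrix.neg_mul, neg_neg]
  simp only [Matrix.add_mul, Matrix.mul_add, Matrix.mul_assoc]
  abel
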